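/- Let C be an ellipse with foci F and F'. If tangent lines to C at points X and Y intersect at Z, then ∠FZX = ∠F'ZY (the lines ZF and ZF' are isogonal with respect to the two tangent lines). -/

import Mathlib

open Real EuclideanGeometry
open scoped RealInnerProductSpace

set_option maxHeartbeats 4000000

/-- (Isogonal property of a conic.) If the tangent lines to the ellipse
`x²/a² + y²/b² = 1` at `X` and `Y` meet at `Z`, and `F = (c,0)`, `F' = (-c,0)` are the
foci (`c = √(a² - b²)`), then `∠ F Z X = ∠ F' Z Y`: the lines `ZF` and `ZF'` are isogonal
with respect to the two tangent lines. -/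
theorem isogonal_property (a b c : ℝ) (hb : 0 < b) (hab : b < a)
    (hc : c = Real.sqrt (a ^ 2 - b ^ 2))
    (X Y Z F F' : EuclideanSpace ℝ (Fin 2))
    (hF0 : F 0 = c) (hF1 : F 1 = 0) (hF'0 : F' 0 = -c) (hF'1 : F' 1 = 0)
    (hX : (X 0) ^ 2 / a ^ 2 + (X 1) ^ 2 / b ^ 2 = 1)
    (hY : (Y 0) ^ 2 / a ^ 2 + (Y 1) ^ 2 / b ^ 2 = 1)
    (hXY : X ≠ Y)
    (hZX : Z 0 * X 0 / a ^ 2 + Z 1 * X 1 / b ^ 2 = 1)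
    (hZY : Z 0 * Y 0 / a ^ 2 + Z 1 * Y 1 / b ^ 2 = 1) :
    ∠ F Z X = ∠ F' Z Y := by
  have ha : 0 < a := hb.trans hab
  have ha0 : a ≠ 0 := ne_of_gt ha
  have hb0 : b ≠ 0 := ne_of_gt hb
  have hc2 : c ^ 2 = a ^ 2 - b ^ 2 := by
    rw [hc]; exact Real.sq_sqrt (by nlinarith)
  have hc0 : 0 ≤ c := by rw [hc]; exact Real.sqrt_nonneg _
  have hca : c < a := by nlinarith [hc2, pow_pos hb 2]
  have e1 : b ^ 2 * (X 0) ^ 2 + a ^ 2 * (X 1) ^ 2 = a ^ 2 * b ^ 2 := by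
    have h := hX; field_simp at h; linear_combination h
  have e2 : b ^ 2 * (Y 0) ^ 2 + a ^ 2 * (Y 1) ^ 2 = a ^ 2 * b ^ 2 := by
    have h := hY; field_simp at h; linear_combination h
  have e3 : b ^ 2 * (Z 0 * X 0) + a ^ 2 * (Z 1 * X 1) = a ^ 2 * b ^ 2 := by
    have h := hZX; field_simp at h; linear_combination h
  have e4 : b ^ 2 * (Z 0 * Y 0) + a ^ 2 * (Z 1 * Y 1) = a ^ 2 * b ^ 2 := by
    have h := hZY; field_simp at h; linear_combination h
  have hD : X 0 * Y 1 - Y 0 * X 1 ≠ 0 := by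
    intro h0
    have hsq : ((b*X 0)*(b*Y 0)+(a*X 1)*(a*Y 1))^2 = ((b*X 0)^2+(a*X 1)^2)^2 := by
      linear_combination (-(a*b)^2*(X 0*Y 1 - Y 0*X 1))*h0
        + ((b*X 0)^2+(a*X 1)^2)*e2 - ((b*X 0)^2+(a*X 1)^2)*e1
    have hfac : (((b*X 0)*(b*Y 0)+(a*X 1)*(a*Y 1)) - ((b*X 0)^2+(a*X 1)^2))
        * (((b*X 0)*(b*Y 0)+(a*X 1)*(a*Y 1)) + ((b*X 0)^2+(a*X 1)^2)) = 0 := by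
      linear_combination hsq
    rcases mul_eq_zero.mp hfac with h1 | h2
    · have hd0 : (b*X 0 - b*Y 0)^2 + (a*X 1 - a*Y 1)^2 = 0 := by
        linear_combination e2 - e1 - 2*h1
      have h3 : (b*X 0 - b*Y 0)^2 = 0 := by
        nlinarith [sq_nonneg (b*X 0 - b*Y 0), sq_nonneg (a*X 1 - a*Y 1)]
      have h3' : (a*X 1 - a*Y 1)^2 = 0 := by
        nlinarith [sq_nonneg (b*X 0 - b*Y 0), sq_nonneg (a*X 1 - a*Y 1)]
      have h4 : b*X 0 - b*Y 0 = 0 := by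
        exact (pow_eq_zero_iff two_ne_zero).mp h3
      have h4' : a*X 1 - a*Y 1 = 0 := by
        exact (pow_eq_zero_iff two_ne_zero).mp h3'
      have hx0 : X 0 = Y 0 := by
        rcases mul_eq_zero.mp (show b*(X 0 - Y 0) = 0 by linear_combination h4) with h | h
        · exact absurd h hb0
        · linarith
      have hx1 : X 1 = Y 1 := by
        rcases mul_eq_zero.mp (show a*(X 1 - Y 1) = 0 by linear_combination h4') with h | h
        · exact absurd h ha0
        · linarith
      exact hXY (PiLp.ext fun i => by fin_cases i <;> assumption)
    · have hd0 : (b*X 0 + b*Y 0)^2 + (a*X 1 + a*Y 1)^2 = 0 := by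
        linear_combination e2 - e1 + 2*h2
      have h3 : (b*X 0 + b*Y 0)^2 = 0 := by
        nlinarith [sq_nonneg (b*X 0 + b*Y 0), sq_nonneg (a*X 1 + a*Y 1)]
      have h3' : (a*X 1 + a*Y 1)^2 = 0 := by
        nlinarith [sq_nonneg (b*X 0 + b*Y 0), sq_nonneg (a*X 1 + a*Y 1)]
      have h4 : b*X 0 + b*Y 0 = 0 := by
        exact (pow_eq_zero_iff two_ne_zero).mp h3
      have h4' : a*X 1 + a*Y 1 = 0 := by
        exact (pow_eq_zero_iff two_ne_zero).mp h3'
      have hx0 : Y 0 = -X 0 := by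
        rcases mul_eq_zero.mp (show b*(X 0 + Y 0) = 0 by linear_combination h4) with h | h
        · exact absurd h hb0
        · linarith
      have hx1 : Y 1 = -X 1 := by
        rcases mul_eq_zero.mp (show a*(X 1 + Y 1) = 0 by linear_combination h4') with h | h
        · exact absurd h ha0
        · linarith
      rw [hx0, hx1] at e4
      have h5 : (2:ℝ)*(a^2*b^2) = 0 := by linear_combination -e3 - e4
      have h6 : 0 < a^2*b^2 := by positivity
      linarith
  have hz1 : Z 0 * (X 0 * Y 1 - Y 0 * X 1) = a^2*(Y 1 - X 1) := by
    have h : b^2*(Z 0 * (X 0 * Y 1 - Y 0 * X 1)) = b^2*(a^2*(Y 1 - X 1)) := by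
      linear_combination Y 1 * e3 - X 1 * e4
    exact mul_left_cancel₀ (pow_ne_zero 2 hb0) h
  have hz2 : Z 1 * (X 0 * Y 1 - Y 0 * X 1) = b^2*(X 0 - Y 0) := by
    have h : a^2*(Z 1 * (X 0 * Y 1 - Y 0 * X 1)) = a^2*(b^2*(X 0 - Y 0)) := by
      linear_combination X 0 * e4 - Y 0 * e3
    exact mul_left_cancel₀ (pow_ne_zero 2 ha0) h
  have hDD : a^2*(X 0 * Y 1 - Y 0 * X 1)^2 ≠ 0 :=
    mul_ne_zero (pow_ne_zero 2 ha0) (pow_ne_zero 2 hD)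
  have key1 : ((-c - Z 0)*(Y 0 - Z 0) + (0 - Z 1)*(Y 1 - Z 1)) * (a^2 - c*X 0)
      = ((c - Z 0)*(X 0 - Z 0) + (0 - Z 1)*(X 1 - Z 1)) * (a^2 + c*Y 0) := by
    have h : a^2*(X 0 * Y 1 - Y 0 * X 1)^2 * (((-c - Z 0)*(Y 0 - Z 0) + (0 - Z 1)*(Y 1 - Z 1)) * (a^2 - c*X 0))
        = a^2*(X 0 * Y 1 - Y 0 * X 1)^2 * (((c - Z 0)*(X 0 - Z 0) + (0 - Z 1)*(X 1 - Z 1)) * (a^2 + c*Y 0)) := by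
      linear_combination ((a^2*c*(X 1)*(Y 0)^2*(Z 0) - a^2*c*(X 0)*(Y 0)*(Y 1)*(Z 0) + a^2*c*(X 0)*(X 1)*(Y 0)*(Z 0) - 2*a^2*c*(X 0)*(X 1)*(Y 0)^2 - a^2*c*(X 0)^2*(Y 1)*(Z 0) + 2*a^2*c*(X 0)^2*(Y 0)*(Y 1) - a^2*c^2*(X 1)*(Y 0)^2 + a^2*c^2*(X 0)*(Y 0)*(Y 1) + a^2*c^2*(X 0)*(X 1)*(Y 0) - a^2*c^2*(X 0)^2*(Y 1) + a^4*(X 1)*(Y 0)^2 - a^4*(X 0)*(Y 0)*(Y 1) - a^4*(X 0)*(X 1)*(Y 0) + a^4*(X 0)^2*(Y 1) - a^4*c*(Y 0)*(Y 1) - a^4*c*(X 1)*(Y 0) + a^4*c*(X 0)*(Y 1) + a^4*c*(X 0)*(X 1)))*hz1 + ((a^2*c*(X 1)*(Y 0)^2*(Z 1) - a^2*c*(X 1)^2*(Y 0)^2 - a^2*c*(X 0)*(Y 0)*(Y 1)*(Z 1) + a^2*c*(X 0)*(X 1)*(Y 0)*(Z 1) - a^2*c*(X 0)^2*(Y 1)*(Z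 1) + a^2*c*(X 0)^2*(Y 1)^2 + a^2*b^2*c*(Y 0)^2 - a^2*b^2*c*(X 0)^2 + a^4*(X 1)*(Y 0)*(Y 1) - a^4*(X 1)^2*(Y 0) - a^4*(X 0)*(Y 1)^2 + a^4*(X 0)*(X 1)*(Y 1)))*hz2 + ((b^2*c*(Y 0)^3 - b^2*c*(X 0)*(Y 0)^2 - a^2*c*(Y 0)^3 + a^2*c*(X 0)*(Y 0)^2 + a^4*c*(Y 0) - a^4*c*(X 0)))*e1 + ((- b^2*c*(X 0)^2*(Y 0) + b^2*c*(X 0)^3 + a^2*c*(X 0)^2*(Y 0) - a^2*c*(X 0)^3 - a^4*c*(Y 0) + a^4*c*(X 0)))*e2 + ((- a^4*(X 1)*(Y 0)^2*(Y 1) + a^4*(X 1)^2*(Y 0)^2 + a^4*(X 0)*(Y 0)*(Y 1)^2 - a^4*(X 0)*(X 1)^2*(Y 0) - a^4*(X 0)^2*(Y 1)^2 + a^4*(X 0)^2*(X 1)*(Y 1)))*hc2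
    exact mul_left_cancel₀ hDD h
  have key2 : ((-c - Z 0)*(Y 1 - Z 1) - (0 - Z 1)*(Y 0 - Z 0)) * (a^2 - c*X 0)
      = -(((c - Z 0)*(X 1 - Z 1) - (0 - Z 1)*(X 0 - Z 0)) * (a^2 + c*Y 0)) := by
    have h : a^2*(X 0 * Y 1 - Y 0 * X 1)^2 * (((-c - Z 0)*(Y 1 - Z 1) - (0 - Z 1)*(Y 0 - Z 0)) * (a^2 - c*X 0))
        = a^2*(X 0 * Y 1 - Y 0 * X 1)^2 * (-(((c - Z 0)*(X 1 - Z 1) - (0 - Z 1)*(X 0 - Z 0)) * (a^2 + c*Y 0))) := by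
      linear_combination ((a^2*c*(X 1)^2*(Y 0)^2 - 2*a^2*c*(X 0)*(X 1)*(Y 0)*(Y 1) + a^2*c*(X 0)^2*(Y 1)^2 + a^4*(X 1)*(Y 0)*(Y 1) + a^4*(X 1)^2*(Y 0) - a^4*(X 0)*(Y 1)^2 - a^4*(X 0)*(X 1)*(Y 1)))*hz1 + ((a^2*c^2*(X 1)*(Y 0)^2 - a^2*c^2*(X 0)*(Y 0)*(Y 1) + a^2*c^2*(X 0)*(X 1)*(Y 0) - a^2*c^2*(X 0)^2*(Y 1) - a^4*(X 1)*(Y 0)^2 + a^4*(X 0)*(Y 0)*(Y 1) - a^4*(X 0)*(X 1)*(Y 0) + a^4*(X 0)^2*(Y 1)))*hz2 + ((- b^2*(X 1)*(Y 0)^3 + b^2*(X 0)*(Y 0)^2*(Y 1) + a^2*(X 1)*(Y 0)^3 - a^2*(X 0)*(Y 0)^2*(Y 1) - a^4*(X 1)*(Y 0) + a^4*(X 0)*(Y 1)))*e1 + ((b^2*(X 0)^2*(X 1)*(Y 0) - b^2*(X 0)^3*(Y 1) - a^2*(X 0)^2*(X 1)*(Y 0) + a^2*(X 0)^3*(Y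 1) + a^4*(X 1)*(Y 0) - a^4*(X 0)*(Y 1)))*e2 + ((a^2*(X 1)^3*(Y 0)^3 - a^2*(X 0)*(X 1)^2*(Y 0)^2*(Y 1) - a^2*(X 0)^2*(X 1)*(Y 0)*(Y 1)^2 + a^2*(X 0)^3*(Y 1)^3 - a^2*b^2*(X 1)*(Y 0)^3 + a^2*b^2*(X 0)*(Y 0)^2*(Y 1) + a^2*b^2*(X 0)^2*(X 1)*(Y 0) - a^2*b^2*(X 0)^3*(Y 1)))*hc2
    exact mul_left_cancel₀ hDD h
  have hx1a : (X 0)^2 ≤ a^2 := by nlinarith [e1, pow_pos hb 2, sq_nonneg (a*X 1)]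
  have hx2a : (Y 0)^2 ≤ a^2 := by nlinarith [e2, pow_pos hb 2, sq_nonneg (a*Y 1)]
  have hx1le : X 0 ≤ a := by nlinarith [hx1a, ha]
  have hx2le : -Y 0 ≤ a := by nlinarith [hx2a, ha]
  have hrho1 : 0 < a^2 - c * X 0 := by
    nlinarith [mul_le_mul_of_nonneg_left hx1le hc0, mul_lt_mul_of_pos_right hca ha]
  have hrho2 : 0 < a^2 + c * Y 0 := by
    nlinarith [mul_le_mul_of_nonneg_left hx2le hc0, mul_lt_mul_of_pos_right hca ha]
  have hcomp : ∀ (P Q : EuclideanSpace ℝ (Fin 2)) (i : Fin 2), (P - Q) i = P i - Q i :=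
    fun _ _ _ => rfl
  have hns : ∀ u : EuclideanSpace ℝ (Fin 2), ‖u‖^2 = (u 0)^2 + (u 1)^2 := by
    intro u
    rw [EuclideanSpace.norm_eq, Real.sq_sqrt (by positivity)]
    simp [Fin.sum_univ_two, sq_abs]
  have hip : ∀ u v : EuclideanSpace ℝ (Fin 2), ⟪u, v⟫ = u 0 * v 0 + u 1 * v 1 := by
    intro u v
    simp [PiLp.inner_apply, Fin.sum_univ_two, RCLike.inner_apply, mul_comm]
  have hA1 : ‖F - Z‖^2 = (c - Z 0)^2 + (0 - Z 1)^2 := by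
    rw [hns]; simp only [hcomp, hF0, hF1]
  have hA2 : ‖X - Z‖^2 = (X 0 - Z 0)^2 + (X 1 - Z 1)^2 := by
    rw [hns]; simp only [hcomp]
  have hA3 : ‖F' - Z‖^2 = (-c - Z 0)^2 + (0 - Z 1)^2 := by
    rw [hns]; simp only [hcomp, hF'0, hF'1]
  have hA4 : ‖Y - Z‖^2 = (Y 0 - Z 0)^2 + (Y 1 - Z 1)^2 := by
    rw [hns]; simp only [hcomp]
  have hi1 : ⟪F - Z, X - Z⟫ = (c - Z 0)*(X 0 - Z 0) + (0 - Z 1)*(X 1 - Z 1) := by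
    rw [hip]; simp only [hcomp, hF0, hF1]
  have hi2 : ⟪F' - Z, Y - Z⟫ = (-c - Z 0)*(Y 0 - Z 0) + (0 - Z 1)*(Y 1 - Z 1) := by
    rw [hip]; simp only [hcomp, hF'0, hF'1]
  have hprod1 : (‖F - Z‖*‖X - Z‖)^2
      = ((c - Z 0)*(X 0 - Z 0) + (0 - Z 1)*(X 1 - Z 1))^2
        + ((c - Z 0)*(X 1 - Z 1) - (0 - Z 1)*(X 0 - Z 0))^2 := by
    rw [mul_pow, hA1, hA2]; ring
  have hprod2 : (‖F' - Z‖*‖Y - Z‖)^2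
      = ((-c - Z 0)*(Y 0 - Z 0) + (0 - Z 1)*(Y 1 - Z 1))^2
        + ((-c - Z 0)*(Y 1 - Z 1) - (0 - Z 1)*(Y 0 - Z 0))^2 := by
    rw [mul_pow, hA3, hA4]; ring
  have hprodrel : (‖F' - Z‖*‖Y - Z‖) * (a^2 - c*X 0) = (‖F - Z‖*‖X - Z‖) * (a^2 + c*Y 0) := by
    have hsq : ((‖F' - Z‖*‖Y - Z‖) * (a^2 - c*X 0))^2
        = ((‖F - Z‖*‖X - Z‖) * (a^2 + c*Y 0))^2 := by
      linear_combination (a^2 - c*X 0)^2*hprod2 - (a^2 + c*Y 0)^2*hprod1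
        + (((-c - Z 0)*(Y 0 - Z 0) + (0 - Z 1)*(Y 1 - Z 1)) * (a^2 - c*X 0)
          + ((c - Z 0)*(X 0 - Z 0) + (0 - Z 1)*(X 1 - Z 1)) * (a^2 + c*Y 0))*key1
        + (((-c - Z 0)*(Y 1 - Z 1) - (0 - Z 1)*(Y 0 - Z 0)) * (a^2 - c*X 0)
          - ((c - Z 0)*(X 1 - Z 1) - (0 - Z 1)*(X 0 - Z 0)) * (a^2 + c*Y 0))*key2
    have hpos1 : 0 ≤ (‖F' - Z‖*‖Y - Z‖) * (a^2 - c*X 0) :=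
      mul_nonneg (mul_nonneg (norm_nonneg _) (norm_nonneg _)) (le_of_lt hrho1)
    have hpos2 : 0 ≤ (‖F - Z‖*‖X - Z‖) * (a^2 + c*Y 0) :=
      mul_nonneg (mul_nonneg (norm_nonneg _) (norm_nonneg _)) (le_of_lt hrho2)
    calc (‖F' - Z‖*‖Y - Z‖) * (a^2 - c*X 0)
        = Real.sqrt (((‖F' - Z‖*‖Y - Z‖) * (a^2 - c*X 0))^2) := (Real.sqrt_sq hpos1).symm
      _ = Real.sqrt (((‖F - Z‖*‖X - Z‖) * (a^2 + c*Y 0))^2) := by rw [hsq]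
      _ = (‖F - Z‖*‖X - Z‖) * (a^2 + c*Y 0) := Real.sqrt_sq hpos2
  have hang : ∀ P Q R : EuclideanSpace ℝ (Fin 2),
      ∠ P Q R = Real.arccos (⟪P - Q, R - Q⟫ / (‖P - Q‖ * ‖R - Q‖)) := by
    intro P Q R
    rw [EuclideanGeometry.angle, InnerProductGeometry.angle, vsub_eq_sub, vsub_eq_sub]
  rw [hang, hang]
  congr 1
  rcases eq_or_ne (‖F - Z‖*‖X - Z‖) 0 with hn0 | hn0
  · have hn20 : ‖F' - Z‖*‖Y - Z‖ = 0 := by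
      have h := hprodrel
      rw [hn0, zero_mul] at h
      exact (mul_eq_zero.mp h).resolve_right (ne_of_gt hrho1)
    rw [hn0, hn20]
    simp
  · have hn20 : ‖F' - Z‖*‖Y - Z‖ ≠ 0 := by
      intro h0
      apply hn0
      have h := hprodrel
      rw [h0, zero_mul] at h
      exact (mul_eq_zero.mp h.symm).resolve_right (ne_of_gt hrho2)
    rw [hi1, hi2, div_eq_div_iff hn0 hn20]
    have hcan : (((c - Z 0)*(X 0 - Z 0) + (0 - Z 1)*(X 1 - Z 1)) * (‖F' - Z‖*‖Y - Z‖)) * (a^2 - c*X 0)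
        = ((((-c - Z 0)*(Y 0 - Z 0) + (0 - Z 1)*(Y 1 - Z 1))) * (‖F - Z‖*‖X - Z‖)) * (a^2 - c*X 0) := by
      linear_combination (((c - Z 0)*(X 0 - Z 0) + (0 - Z 1)*(X 1 - Z 1)))*hprodrel
        - (‖F - Z‖*‖X - Z‖)*key1
    exact mul_right_cancel₀ (ne_of_gt hrho1) hcan
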